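/- Let K be a field with algebraic closure K̄, and let S be a finite subset of K̄ such that: every α ∈ S is separable over K (its minimal polynomial over K is separable); S is stable under every K-algebra automorphism of K̄ (σ(α) ∈ S for all σ : K̄ ≃ₐ[K] K̄ and α ∈ S); and there is N ∈ ℕ with |S| ≤ N such that 2·natDegree(minpoly K α) > N for every α ∈ S. Then the automorphism group acts transitively on S: for all α, β ∈ S there exists a K-algebra automorphism σ of K̄ with σ(α) = β. -/

import Mathlib

/-- **Theorem (Galois acts transitively on stable sets of separable elements of large
degree).** -/
theorem galois_transitive_of_large_degree
    (K : Type) [Field K] (S : Finset (AlgebraicClosure K))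
    (hsep : ∀ α ∈ S, (minpoly K α).Separable)
    (hstab : ∀ σ : AlgebraicClosure K ≃ₐ[K] AlgebraicClosure K, ∀ α ∈ S, σ α ∈ S)
    (N : ℕ) (hcard : S.card ≤ N)
    (hdeg : ∀ α ∈ S, N < 2 * (minpoly K α).natDegree) :
    ∀ α ∈ S, ∀ β ∈ S, ∃ σ : AlgebraicClosure K ≃ₐ[K] AlgebraicClosure K, σ α = β := by
  intro α hα β hβ
  classical
  have hint : ∀ γ ∈ S, IsIntegral K γ := fun γ _ => Algebra.IsIntegral.isIntegral γ
  have key : ∀ γ ∈ S, ∀ x : AlgebraicClosure K, Polynomial.aeval x (minpoly K γ) = 0 →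
      ∃ σ : AlgebraicClosure K ≃ₐ[K] AlgebraicClosure K, σ γ = x := by
    intro γ hγ x hx
    exact minpoly.exists_algEquiv_of_root' (hint γ hγ).isAlgebraic hx
  let R : AlgebraicClosure K → Finset (AlgebraicClosure K) :=
    fun γ => ((minpoly K γ).aroots (AlgebraicClosure K)).toFinset
  have hmem : ∀ γ, ∀ x, x ∈ R γ ↔ minpoly K γ ≠ 0 ∧ Polynomial.aeval x (minpoly K γ) = 0 := by
    intro γ x
    simp [R, Polynomial.mem_aroots]
  have hRsub : ∀ γ ∈ S, R γ ⊆ S := by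
    intro γ hγ x hx
    obtain ⟨σ, hσ⟩ := key γ hγ x ((hmem γ x).mp hx).2
    exact hσ ▸ hstab σ γ hγ
  have hRcard : ∀ γ ∈ S, (R γ).card = (minpoly K γ).natDegree := by
    intro γ hγ
    have hsplits : ((minpoly K γ).map (algebraMap K (AlgebraicClosure K))).Splits :=
      IsAlgClosed.splits _
    have hcount : ((minpoly K γ).aroots (AlgebraicClosure K)).card
        = (minpoly K γ).natDegree := by
      rw [Polynomial.aroots, (Polynomial.splits_iff_card_roots).mp
        hsplits]
      exact Polynomial.natDegree_map _
    have hnodup : ((minpoly K γ).aroots (AlgebraicClosure K)).Nodup :=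
      Polynomial.nodup_roots ((hsep γ hγ).map)
    simp only [R]
    rw [Multiset.toFinset_card_of_nodup hnodup, hcount]
  have hbig : S.card < (R α).card + (R β).card := by
    have h1 := hdeg α hα
    have h2 := hdeg β hβ
    have h3 := hRcard α hα
    have h4 := hRcard β hβ
    omega
  have hinter : ((R α) ∩ (R β)).Nonempty := by
    by_contra h
    rw [Finset.not_nonempty_iff_eq_empty] at h
    have hu := Finset.card_union_of_disjoint (Finset.disjoint_iff_inter_eq_empty.mpr h)
    have hsub : (R α) ∪ (R β) ⊆ S := Finset.union_subset (hRsub α hα) (hRsub β hβ)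
    have := Finset.card_le_card hsub
    omega
  obtain ⟨γ, hγ⟩ := hinter
  rw [Finset.mem_inter] at hγ
  obtain ⟨σ, hσ⟩ := key α hα γ ((hmem α γ).mp hγ.1).2
  obtain ⟨τ, hτ⟩ := key β hβ γ ((hmem β γ).mp hγ.2).2
  exact ⟨σ.trans τ.symm, by simp [AlgEquiv.trans_apply, hσ, ← hτ]⟩
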